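/- Let k be a positive integer and suppose that for infinitely many primes p, every subset of ℤ/pℤ \ {0} of size k with nonzero sum admits an ordering whose partial sums are nonzero and pairwise distinct. Then in every torsion-free abelian group G, every subset A of G \ {0} of size k with ∑_{z∈A} z ≠ 0 admits an ordering of its elements whose partial sums are nonzero and pairwise distinct. -/

import Mathlib

/-- An ordering of the finite set `A` (as a list) whose partial sums are all nonzero
and pairwise distinct. -/
def IsAlspachOrdering {G : Type*} [AddCommGroup G] (A : Finset G) (l : List G) : Prop :=
  l.Nodup ∧ (∀ x, x ∈ l ↔ x ∈ A) ∧
    (∀ i : ℕ, 1 ≤ i → i ≤ l.length → (l.take i).sum ≠ 0) ∧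
    (∀ i j : ℕ, 1 ≤ i → i < j → j ≤ l.length → (l.take i).sum ≠ (l.take j).sum)

private lemma alspach_map {M N : Type*} [AddCommGroup M] [AddCommGroup N] [DecidableEq N]
    (f : M →+ N) (hf : Function.Injective f) {A : Finset M} {l : List M}
    (h : IsAlspachOrdering A l) : IsAlspachOrdering (A.image f) (l.map f) := by
  obtain ⟨h1, h2, h3, h4⟩ := h
  have hsum : ∀ i : ℕ, ((l.map f).take i).sum = f ((l.take i).sum) := by
    intro i
    rw [← List.map_take, ← map_list_sum]
  refine ⟨h1.map hf, ?_, ?_, ?_⟩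
  · intro x
    simp only [List.mem_map, Finset.mem_image]
    constructor
    · rintro ⟨a, ha, rfl⟩; exact ⟨a, (h2 a).1 ha, rfl⟩
    · rintro ⟨a, ha, rfl⟩; exact ⟨a, (h2 a).2 ha, rfl⟩
  · intro i hi1 hi2
    rw [List.length_map] at hi2
    rw [hsum]
    intro h0
    exact h3 i hi1 hi2 (hf (by simpa using h0))
  · intro i j hi1 hij hj
    rw [List.length_map] at hj
    rw [hsum, hsum]
    intro h0
    exact h4 i j hi1 hij hj (hf h0)

private lemma alspach_pull {M N : Type*} [AddCommGroup M] [AddCommGroup N] [DecidableEq N]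
    (f : M →+ N) {A : Finset M} (hf : Set.InjOn f A) {l' : List N}
    (h : IsAlspachOrdering (A.image f) l') : ∃ l : List M, IsAlspachOrdering A l := by
  classical
  haveI : Nonempty M := ⟨0⟩
  obtain ⟨h1, h2, h3, h4⟩ := h
  set g : N → M := Function.invFunOn f A with hg
  have hmem : ∀ z ∈ l', z ∈ A.image f := fun z hz => (h2 z).1 hz
  have hfg : ∀ z ∈ A.image f, f (g z) = z := by
    intro z hz
    obtain ⟨a, ha, rfl⟩ := Finset.mem_image.1 hz
    exact Function.invFunOn_eq ⟨a, ha, rfl⟩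
  have hgmem : ∀ z ∈ A.image f, g z ∈ A := by
    intro z hz
    obtain ⟨a, ha, rfl⟩ := Finset.mem_image.1 hz
    exact Function.invFunOn_mem ⟨a, ha, rfl⟩
  have hmap : (l'.map g).map f = l' := by
    rw [List.map_map]
    have : ∀ z ∈ l', (f ∘ g) z = id z := fun z hz => hfg z (hmem z hz)
    rw [List.map_congr_left this, List.map_id]
  have hsum : ∀ i : ℕ, f (((l'.map g).take i).sum) = (l'.take i).sum := by
    intro i
    rw [map_list_sum, List.map_take, hmap]
  have hlen : (l'.map g).length = l'.length := List.length_map _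
  refine ⟨l'.map g, ?_, ?_, ?_, ?_⟩
  · refine List.Nodup.map_on ?_ h1
    intro x hx y hy hxy
    have := congrArg f hxy
    rwa [hfg x (hmem x hx), hfg y (hmem y hy)] at this
  · intro x
    simp only [List.mem_map]
    constructor
    · rintro ⟨z, hz, rfl⟩
      exact hgmem z (hmem z hz)
    · intro hx
      refine ⟨f x, (h2 (f x)).2 (Finset.mem_image_of_mem f hx), ?_⟩
      exact hf (hgmem (f x) (Finset.mem_image_of_mem f hx)) hx (hfg (f x) (Finset.mem_image_of_mem f hx))
  · intro i hi1 hi2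
    rw [hlen] at hi2
    intro h0
    exact h3 i hi1 hi2 (by rw [← hsum i, h0, map_zero])
  · intro i j hi1 hij hj
    rw [hlen] at hj
    intro h0
    exact h4 i j hi1 hij hj (by rw [← hsum i, ← hsum j, h0])

private lemma exists_weights {ι : Type*} (D : Finset (ι →₀ ℤ)) :
    (∀ d ∈ D, d ≠ 0) → ∃ x : ι → ℤ, ∀ d ∈ D, (d.sum fun i c => c * x i) ≠ 0 := by
  classical
  induction D using Finset.induction_on with
  | empty => exact fun _ => ⟨0, fun d hd => absurd hd (Finset.notMem_empty d)⟩
  | @insert a s ha ih =>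
    intro hD
    obtain ⟨x, hx⟩ := ih (fun d hd => hD d (Finset.mem_insert_of_mem hd))
    have hane : a ≠ 0 := hD a (Finset.mem_insert_self a s)
    obtain ⟨i0, hi0⟩ : ∃ i, a i ≠ 0 := by
      by_contra hcon
      push_neg at hcon
      exact hane (Finsupp.ext fun i => hcon i)
    set y : ι → ℤ := fun i => if i = i0 then 1 else 0 with hy
    set cf : (ι →₀ ℤ) → ℤ := fun e => e.sum fun i co => co * y i with hcf
    set af : (ι →₀ ℤ) → ℤ := fun e => e.sum fun i co => co * x i with haf
    have hca : cf a = a i0 := by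
      have : ∀ i ∈ a.support, a i * y i = if i = i0 then a i else 0 := by
        intro i _
        simp only [hy]
        split <;> simp
      rw [hcf]
      simp only [Finsupp.sum]
      rw [Finset.sum_congr rfl this, Finset.sum_ite_eq' a.support i0 a]
      rw [if_pos (Finsupp.mem_support_iff.2 hi0)]
    set t : ℤ := 1 + ∑ e ∈ insert a s, |af e| with ht
    have htpos : 0 < t := by
      have : (0:ℤ) ≤ ∑ e ∈ insert a s, |af e| :=
        Finset.sum_nonneg fun e _ => abs_nonneg _
      omega
    have htgt : ∀ e ∈ insert a s, |af e| < t := by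
      intro e he
      have h1 : |af e| ≤ ∑ e ∈ insert a s, |af e| :=
        Finset.single_le_sum (fun e _ => abs_nonneg (af e)) he
      omega
    refine ⟨fun i => x i + t * y i, ?_⟩
    have key : ∀ e : ι →₀ ℤ, (e.sum fun i co => co * (x i + t * y i)) = af e + t * cf e := by
      intro e
      have h1 : (e.sum fun i co => co * (x i + t * y i))
          = e.sum fun i co => co * x i + t * (co * y i) := by
        apply Finsupp.sum_congr
        intro i _
        ring
      rw [h1, Finsupp.sum_add, haf, hcf, Finsupp.mul_sum]
    intro e he
    rw [key]
    rcases eq_or_ne (cf e) 0 with hc | hc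
    · rw [hc, mul_zero, add_zero]
      rcases Finset.mem_insert.1 he with rfl | hes
      · rw [hca] at hc; exact absurd hc hi0
      · exact hx e hes
    · intro h0
      have habs : |af e| = |t * cf e| := by
        have : af e = -(t * cf e) := by linarith
        rw [this, abs_neg]
      have : t ≤ |t * cf e| := by
        rw [abs_mul, abs_of_pos htpos]
        nlinarith [Int.one_le_abs hc, abs_nonneg (cf e)]
      have := htgt e he
      omega

theorem stmt4 (k : ℕ) (hk : 0 < k)
    (hp : ∀ N : ℕ, ∃ p : ℕ, N < p ∧ p.Prime ∧
      ∀ A : Finset (ZMod p), (0 : ZMod p) ∉ A → A.card = k → ∑ z ∈ A, z ≠ 0 →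
        ∃ l : List (ZMod p), IsAlspachOrdering A l)
    (G : Type*) [AddCommGroup G]
    (htf : ∀ (n : ℕ) (g : G), 0 < n → n • g = 0 → g = 0) :
    ∀ A : Finset G, (0 : G) ∉ A → A.card = k → ∑ z ∈ A, z ≠ 0 →
      ∃ l : List G, IsAlspachOrdering A l := by
  classical
  intro A hA0 hAcard hAsum
  haveI : NoZeroSMulDivisors ℤ G := by
    refine ⟨fun {c x} h => ?_⟩
    by_contra hcon
    push_neg at hcon
    obtain ⟨hc, hxne⟩ := hcon
    obtain ⟨n, rfl | rfl⟩ := Int.eq_nat_or_neg c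
    · have hn : 0 < n := by
        by_contra h'
        push_neg at h'
        interval_cases n
        · exact hc rfl
      exact hxne (htf n x hn (by rwa [natCast_zsmul] at h))
    · have hn : 0 < n := by
        by_contra h'
        push_neg at h'
        interval_cases n
        · exact hc (by simp)
      apply hxne
      apply htf n x hn
      have h2 : -((n : ℤ) • x) = 0 := by rwa [← neg_zsmul]
      rw [natCast_zsmul] at h2
      exact neg_eq_zero.mp h2
  set M : Submodule ℤ G := Submodule.span ℤ (A : Set G) with hMdef
  haveI : Module.Finite ℤ M := Module.Finite.span_of_finite ℤ A.finite_toSet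
  haveI : Module.Free ℤ M := Module.free_of_finite_type_torsion_free'
  set ι := Module.Free.ChooseBasisIndex ℤ M with hι
  set b : Module.Basis ι ℤ M := Module.Free.chooseBasis ℤ M with hb
  -- lift A into M
  let e : {x // x ∈ A} ↪ M :=
    ⟨fun a => ⟨a.1, Submodule.subset_span a.2⟩, by
      intro a b hab
      simp only [Subtype.mk.injEq] at hab
      exact Subtype.ext hab⟩
  set AM : Finset M := A.attach.map e with hAM
  have hAMval : ∀ m ∈ AM, (m : G) ∈ A := by
    intro m hm
    obtain ⟨a, _, rfl⟩ := Finset.mem_map.1 hm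
    exact a.2
  have hAMcard : AM.card = k := by
    rw [hAM, Finset.card_map, Finset.card_attach, hAcard]
  have himg : AM.image (fun m : M => (m : G)) = A := by
    ext g
    simp only [Finset.mem_image, hAM, Finset.mem_map]
    constructor
    · rintro ⟨m, ⟨a, _, rfl⟩, rfl⟩
      exact a.2
    · intro hg
      exact ⟨⟨g, Submodule.subset_span hg⟩, ⟨⟨g, hg⟩, Finset.mem_attach _ _, rfl⟩, rfl⟩
  set S : M := ∑ m ∈ AM, m with hS
  have hSval : (S : G) = ∑ a ∈ A, a := by
    rw [hS]
    rw [AddSubmonoidClass.coe_finset_sum]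
    rw [hAM, Finset.sum_map]
    exact Finset.sum_attach A id
  -- the set of elements that must stay nonzero
  set DM : Finset M :=
    ((AM ∪ {S}) ∪ (AM ×ˢ AM).image (fun q => q.1 - q.2)).filter (· ≠ 0) with hDM
  have hDM0 : ∀ d ∈ DM, d ≠ 0 := fun d hd => (Finset.mem_filter.1 hd).2
  have hmemDM : ∀ m : M, m ≠ 0 →
      (m ∈ AM ∪ {S} ∨ m ∈ (AM ×ˢ AM).image (fun q => q.1 - q.2)) → m ∈ DM := by
    intro m hm hmm
    rw [hDM, Finset.mem_filter]
    exact ⟨Finset.mem_union.2 hmm, hm⟩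
  have hAMne : ∀ m ∈ AM, m ≠ (0 : M) := by
    intro m hm h0
    apply hA0
    have := hAMval m hm
    rwa [h0] at this
  have hAMDM : ∀ m ∈ AM, m ∈ DM := fun m hm =>
    hmemDM m (hAMne m hm) (Or.inl (Finset.mem_union_left _ hm))
  have hSne : S ≠ 0 := by
    intro h0
    apply hAsum
    rw [← hSval, h0, ZeroMemClass.coe_zero]
  have hSDM : S ∈ DM :=
    hmemDM S hSne (Or.inl (Finset.mem_union_right _ (Finset.mem_singleton_self S)))
  have hsubDM : ∀ m ∈ AM, ∀ n ∈ AM, m ≠ n → m - n ∈ DM := by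
    intro m hm n hn hmn
    refine hmemDM _ (sub_ne_zero.2 hmn) (Or.inr ?_)
    exact Finset.mem_image.2 ⟨(m, n), Finset.mem_product.2 ⟨hm, hn⟩, rfl⟩
  -- a linear functional nonvanishing on DM
  obtain ⟨x, hx⟩ := exists_weights (DM.image (fun m => b.repr m))
    (by
      intro d hd
      obtain ⟨m, hm, rfl⟩ := Finset.mem_image.1 hd
      intro h0
      exact hDM0 m hm (by simpa using b.repr.map_eq_zero_iff.1 h0))
  set F : M →ₗ[ℤ] ℤ := (Finsupp.linearCombination ℤ x).comp (b.repr : M →ₗ[ℤ] (ι →₀ ℤ))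
    with hF
  have hFapp : ∀ m : M, F m = (b.repr m).sum fun i c => c * x i := by
    intro m
    rw [hF, LinearMap.comp_apply, Finsupp.linearCombination_apply]
    simp [smul_eq_mul]
  have hFne : ∀ m ∈ DM, F m ≠ 0 := by
    intro m hm
    rw [hFapp]
    exact hx _ (Finset.mem_image_of_mem _ hm)
  -- choose the prime
  set N : ℕ := DM.sup (fun m => (F m).natAbs) with hN
  obtain ⟨p, hpN, hpp, hprop⟩ := hp N
  have hFp : ∀ m ∈ DM, ((F m : ℤ) : ZMod p) ≠ 0 := by
    intro m hm h0
    rw [ZMod.intCast_zmod_eq_zero_iff_dvd] at h0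
    have hdvd : p ∣ (F m).natAbs := Int.natCast_dvd_natCast.1 (Int.dvd_natAbs.2 h0)
    have hpos : 0 < (F m).natAbs := Int.natAbs_pos.2 (hFne m hm)
    have hle : p ≤ (F m).natAbs := Nat.le_of_dvd hpos hdvd
    have hsup : (F m).natAbs ≤ N := Finset.le_sup (f := fun m => (F m).natAbs) hm
    omega
  set φ : M →+ ZMod p := (Int.castAddHom (ZMod p)).comp F.toAddMonoidHom with hφ
  have hφapp : ∀ m : M, φ m = ((F m : ℤ) : ZMod p) := fun m => rfl
  have hφinj : Set.InjOn φ AM := by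
    intro m hm n hn hmn
    by_contra hne
    apply hFp _ (hsubDM m hm n hn hne)
    show φ (m - n) = 0
    rw [map_sub, hmn, sub_self]
  set A' : Finset (ZMod p) := AM.image φ with hA'
  have h0' : (0 : ZMod p) ∉ A' := by
    rw [hA']
    intro h0
    obtain ⟨m, hm, hm0⟩ := Finset.mem_image.1 h0
    exact hFp m (hAMDM m hm) hm0
  have hcard' : A'.card = k := by
    rw [hA', Finset.card_image_of_injOn hφinj, hAMcard]
  have hsum' : ∑ z ∈ A', z ≠ 0 := by
    rw [hA', Finset.sum_image (fun m hm n hn h => hφinj hm hn h)]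
    rw [← map_sum, ← hS]
    exact hFp S hSDM
  obtain ⟨l', hl'⟩ := hprop A' h0' hcard' hsum'
  obtain ⟨lM, hlM⟩ := alspach_pull φ hφinj (hA' ▸ hl')
  have hvinj : Function.Injective (M.subtype.toAddMonoidHom) := Subtype.val_injective
  have := alspach_map M.subtype.toAddMonoidHom hvinj hlM
  refine ⟨lM.map M.subtype.toAddMonoidHom, ?_⟩
  rwa [show AM.image (M.subtype.toAddMonoidHom) = A from himg] at this
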